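/- Let W, V_1, ..., V_n be a Nica-covariant isometric representation of the odometer semigroup O_n on H. Then the subspace H_u^W = ⋂_{m≥0} W^m H reduces each V_i (it is invariant under V_i and V_i* for all i). -/

import Mathlib

open ContinuousLinearMap

/-- For a Nica-covariant isometric representation `{W, V_1, …, V_n}` of `O_n`,
the subspace `H_u^W = ⋂_{m ≥ 0} W^m H` reduces each `V_i`. -/
theorem stmt_10 {H : Type*} [NormedAddCommGroup H] [InnerProductSpace ℂ H] [CompleteSpace H]
    (n : ℕ) (hn : 0 < n) (W : H →L[ℂ] H) (V : Fin n → H →L[ℂ] H)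
    (hWiso : adjoint W ∘L W = 1)
    (hViso : ∀ i, adjoint (V i) ∘L V i = 1)
    (horth : ∀ i j, i ≠ j → adjoint (V i) ∘L V j = 0)
    (hWV : ∀ i : Fin n, ∀ h : (i : ℕ) + 1 < n, W ∘L V i = V ⟨(i : ℕ) + 1, h⟩)
    (hWVn : W ∘L V ⟨n - 1, by omega⟩ = V ⟨0, hn⟩ ∘L W)
    (hNC : adjoint W ∘L V ⟨0, hn⟩ = V ⟨n - 1, by omega⟩ ∘L adjoint W)
    (HuW : Submodule ℂ H) (hHuW : HuW = ⨅ m : ℕ, LinearMap.range ((W ^ m : H →L[ℂ] H) : H →ₗ[ℂ] H)) :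
    ∀ i : Fin n, ∀ x ∈ HuW, V i x ∈ HuW ∧ adjoint (V i) x ∈ HuW := by
  subst hHuW
  set A := adjoint W with hA
  have Veq : ∀ (a b : ℕ) (ha : a < n) (hb : b < n), a = b → V ⟨a, ha⟩ = V ⟨b, hb⟩ := by
    intro a b ha hb h; subst h; rfl
  have hWVp : ∀ (a : ℕ) (h : a + 1 < n) (x : H),
      W (V ⟨a, by omega⟩ x) = V ⟨a + 1, h⟩ x := by
    intro a h x
    have := congrArg (fun f => f x) (hWV ⟨a, by omega⟩ h)
    simpa using this
  have hWVnp : ∀ x : H, W (V ⟨n - 1, by omega⟩ x) = V ⟨0, hn⟩ (W x) := by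
    intro x
    have := congrArg (fun f => f x) hWVn
    simpa using this
  have hNCp : ∀ x : H, A (V ⟨0, hn⟩ x) = V ⟨n - 1, by omega⟩ (A x) := by
    intro x
    have := congrArg (fun f => f x) hNC
    simpa using this
  have hWisop : ∀ x : H, A (W x) = x := by
    intro x
    have := congrArg (fun f => f x) hWiso
    simpa using this
  -- upward chain
  have up : ∀ (b a : ℕ) (hab : a + b < n) (x : H),
      (W ^ b) (V ⟨a, by omega⟩ x) = V ⟨a + b, hab⟩ x := by
    intro b
    induction b with
    | zero => intro a hab x; simp
    | succ b ih =>
      intro a hab x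
      have hb : a + b < n := by omega
      have h1 : (W ^ (b + 1)) (V ⟨a, by omega⟩ x)
          = W ((W ^ b) (V ⟨a, by omega⟩ x)) := by
        rw [pow_succ']; rfl
      rw [h1, ih a hb, hWVp (a + b) (by omega)]
      exact congrFun (congrArg _ (Veq _ _ _ _ (by omega))) x
  -- W^n ∘ V_a = V_a ∘ W
  have Wn : ∀ (a : ℕ) (ha : a < n) (x : H),
      (W ^ n) (V ⟨a, ha⟩ x) = V ⟨a, ha⟩ (W x) := by
    intro a ha x
    have hpow : (W : H →L[ℂ] H) ^ n = W ^ a * (W * W ^ (n - 1 - a)) := by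
      have h1 := pow_add W a (1 + (n - 1 - a))
      have h2 := pow_add W 1 (n - 1 - a)
      have h3 : a + (1 + (n - 1 - a)) = n := by omega
      rw [h3] at h1
      rw [h1, h2, pow_one]
    calc (W ^ n) (V ⟨a, ha⟩ x)
        = (W ^ a) (W ((W ^ (n - 1 - a)) (V ⟨a, ha⟩ x))) := by
          rw [hpow]; rfl
      _ = (W ^ a) (W (V ⟨a + (n - 1 - a), by omega⟩ x)) := by
          rw [up (n - 1 - a) a (by omega) x]
      _ = (W ^ a) (W (V ⟨n - 1, by omega⟩ x)) := by
          rw [Veq (a + (n - 1 - a)) (n - 1) (by omega) (by omega) (by omega)]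
      _ = (W ^ a) (V ⟨0, hn⟩ (W x)) := by rw [hWVnp]
      _ = V ⟨0 + a, by omega⟩ (W x) := up a 0 (by omega) (W x)
      _ = V ⟨a, ha⟩ (W x) := by
          rw [Veq (0 + a) a (by omega) ha (by omega)]
  -- downward step
  have dstep : ∀ (a : ℕ) (h : a + 1 < n) (x : H),
      A (V ⟨a + 1, h⟩ x) = V ⟨a, by omega⟩ x := by
    intro a h x
    rw [← hWVp a h x, hWisop]
  -- downward chain
  have down : ∀ (b a : ℕ) (hab : a + b < n) (x : H),
      (A ^ b) (V ⟨a + b, hab⟩ x) = V ⟨a, by omega⟩ x := by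
    intro b
    induction b with
    | zero => intro a hab x; simp
    | succ b ih =>
      intro a hab x
      have h1 : (A ^ (b + 1)) (V ⟨a + (b + 1), hab⟩ x)
          = (A ^ b) (A (V ⟨a + (b + 1), hab⟩ x)) := by
        rw [pow_succ]; rfl
      rw [h1]
      have h2 : A (V ⟨a + (b + 1), hab⟩ x) = V ⟨a + b, by omega⟩ x := by
        rw [Veq (a + (b + 1)) ((a + b) + 1) hab (by omega) (by omega)]
        exact dstep (a + b) (by omega) x
      rw [h2, ih a (by omega)]
  -- A^n ∘ V_a = V_a ∘ A  (operator form for adjoint-taking)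
  have An : ∀ (a : ℕ) (ha : a < n),
      (A ^ n) ∘L V ⟨a, ha⟩ = V ⟨a, ha⟩ ∘L A := by
    intro a ha
    ext x
    have hpow : A ^ n = A ^ (n - 1 - a) * (A * A ^ a) := by
      have h1 := pow_add A (n - 1 - a) (1 + a)
      have h2 := pow_add A 1 a
      have h3 : (n - 1 - a) + (1 + a) = n := by omega
      rw [h3] at h1
      rw [h1, h2, pow_one]
    have : (A ^ n) (V ⟨a, ha⟩ x)
        = (A ^ (n - 1 - a)) (A ((A ^ a) (V ⟨a, ha⟩ x))) := by
      rw [hpow]; rfl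
    rw [ContinuousLinearMap.comp_apply, this]
    have h2 : (A ^ a) (V ⟨a, ha⟩ x) = V ⟨0, hn⟩ x := by
      rw [Veq a (0 + a) ha (by omega) (by omega)]
      exact down a 0 (by omega) x
    rw [h2, hNCp]
    have h3 : V ⟨n - 1, by omega⟩ (A x) = V ⟨a + (n - 1 - a), by omega⟩ (A x) := by
      rw [Veq (n - 1) (a + (n - 1 - a)) (by omega) (by omega) (by omega)]
    rw [h3, down (n - 1 - a) a (by omega)]
    rfl
  -- adjoint of A^k is W^k
  have adjpow : ∀ k : ℕ, adjoint (A ^ k) = W ^ k := by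
    intro k
    induction k with
    | zero =>
      rw [pow_zero, pow_zero]
      exact adjoint_id
    | succ k ih =>
      have : A ^ (k + 1) = (A ^ k) ∘L A := by rw [pow_succ]; rfl
      rw [this, adjoint_comp, ih, hA, adjoint_adjoint, pow_succ']
      rfl
  -- V_a* ∘ W^n = W ∘ V_a*
  have Vad : ∀ (a : ℕ) (ha : a < n) (x : H),
      adjoint (V ⟨a, ha⟩) ((W ^ n) x) = W (adjoint (V ⟨a, ha⟩) x) := by
    intro a ha x
    have h1 := congrArg ContinuousLinearMap.adjoint (An a ha)
    rw [adjoint_comp, adjoint_comp, adjpow, hA, adjoint_adjoint] at h1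
    exact congrArg (fun f => f x) h1
  -- V_a ∘ W^m = W^(n*m) ∘ V_a
  have Vm : ∀ (m : ℕ) (a : ℕ) (ha : a < n) (x : H),
      V ⟨a, ha⟩ ((W ^ m) x) = (W ^ (n * m)) (V ⟨a, ha⟩ x) := by
    intro m
    induction m with
    | zero => intro a ha x; simp
    | succ m ih =>
      intro a ha x
      have h1 : (W ^ (m + 1)) x = (W ^ m) (W x) := by rw [pow_succ]; rfl
      rw [h1, ih a ha (W x), ← Wn a ha x]
      have h2 : n * (m + 1) = n * m + n := by ring
      rw [h2, pow_add]
      rfl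
  -- V_a* ∘ W^(n*m) = W^m ∘ V_a*
  have Vadm : ∀ (m : ℕ) (a : ℕ) (ha : a < n) (x : H),
      adjoint (V ⟨a, ha⟩) ((W ^ (n * m)) x) = (W ^ m) (adjoint (V ⟨a, ha⟩) x) := by
    intro m
    induction m with
    | zero => intro a ha x; simp
    | succ m ih =>
      intro a ha x
      have h2 : n * (m + 1) = n * m + n := by ring
      have h1 : (W ^ (n * (m + 1))) x = (W ^ (n * m)) ((W ^ n) x) := by
        rw [h2, pow_add]; rfl
      rw [h1, ih a ha, Vad a ha]
      have h3 : (W ^ (m + 1)) (adjoint (V ⟨a, ha⟩) x)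
          = (W ^ m) (W (adjoint (V ⟨a, ha⟩) x)) := by rw [pow_succ]; rfl
      rw [h3]
  -- main argument
  rintro ⟨a, ha⟩ x hx
  rw [Submodule.mem_iInf] at hx
  constructor
  · rw [Submodule.mem_iInf]
    intro m
    obtain ⟨y, hy⟩ := hx m
    refine ⟨(W ^ ((n - 1) * m)) (V ⟨a, ha⟩ y), ?_⟩
    have : (W ^ m) ((W ^ ((n - 1) * m)) (V ⟨a, ha⟩ y))
        = (W ^ (n * m)) (V ⟨a, ha⟩ y) := by
      have h2 : n * m = m + (n - 1) * m := by
        have h4 : (1 + (n - 1)) * m = m + (n - 1) * m := by ring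
        rw [← h4]; congr 1; omega
      rw [h2, pow_add]; rfl
    rw [ContinuousLinearMap.coe_coe] at hy ⊢
    rw [this, ← Vm m a ha y, hy]
  · rw [Submodule.mem_iInf]
    intro m
    obtain ⟨y, hy⟩ := hx (n * m)
    refine ⟨adjoint (V ⟨a, ha⟩) y, ?_⟩
    rw [ContinuousLinearMap.coe_coe] at hy ⊢
    rw [← Vadm m a ha y, hy]
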